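/- arXiv:1107.0348 — 3 statements merged into one kernel-verified Lean document; each statement's English description precedes it below -/
import Mathlib

section
/- Let f, g : [0,1) → ℝ be bounded non-increasing functions with ‖g‖_∞ ≤ π, and suppose that for every arc I of the unit circle S¹ the Lebesgue measures of the sets {t ∈ [0,1) : e^{i f(t)} ∈ I} and {t ∈ [0,1) : e^{i g(t)} ∈ I} are equal. Then there exists a measurable function ḡ : [0,1) → ℝ such that e^{i f(t)} = e^{i ḡ(t)} for every t ∈ [0,1) and the decreasing rearrangement ḡ* of ḡ equals g almost everywhere on [0,1). -/
open MeasureTheory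

/-- The decreasing rearrangement of a function `h : [0,1) → ℝ` (with respect to
Lebesgue measure on `[0,1)`): `h*(t) = inf {s : |{x ∈ [0,1) : h(x) > s}| ≤ t}`. -/
noncomputable def decreasingRearrangement (h : ℝ → ℝ) (t : ℝ) : ℝ :=
  sInf {s : ℝ | volume {x ∈ Set.Ico (0:ℝ) 1 | s < h x} ≤ ENNReal.ofReal t}

lemma exp_I_eq_iff (a b : ℝ) :
    Complex.exp (Complex.I * a) = Complex.exp (Complex.I * b) ↔
      ∃ n : ℤ, a = b + n * (2 * Real.pi) := by
  rw [Complex.exp_eq_exp_iff_exists_int]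
  constructor
  · rintro ⟨n, h⟩
    refine ⟨n, ?_⟩
    have h2 : Complex.I * (a : ℂ) = Complex.I * ((b : ℂ) + (n : ℂ) * (2 * (Real.pi : ℂ))) := by
      rw [h]; ring
    have h3 := mul_left_cancel₀ Complex.I_ne_zero h2
    exact_mod_cast h3
  · rintro ⟨n, h⟩
    exact ⟨n, by rw [h]; push_cast; ring⟩

lemma exp_inj_Ioc {a b : ℝ} (ha : a ∈ Set.Ioc (-Real.pi) Real.pi)
    (hb : b ∈ Set.Ioc (-Real.pi) Real.pi)
    (h : Complex.exp (Complex.I * a) = Complex.exp (Complex.I * b)) : a = b := by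
  obtain ⟨n, hn⟩ := (exp_I_eq_iff a b).mp h
  have hπ := Real.pi_pos
  have hn0 : n = 0 := by
    rcases lt_trichotomy n 0 with h1 | h1 | h1
    · exfalso
      have h1' : n ≤ -1 := by omega
      have h2 : (n : ℝ) ≤ -1 := by exact_mod_cast h1'
      nlinarith [ha.1, hb.2]
    · exact h1
    · exfalso
      have h2 : (1 : ℝ) ≤ n := by exact_mod_cast h1
      nlinarith [ha.2, hb.1]
  rw [hn0] at hn; simpa using hn

lemma exp_g_cases {c θ : ℝ} (hc : c ∈ Set.Icc (-Real.pi) Real.pi)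
    (hθ : θ ∈ Set.Ioc (-Real.pi) Real.pi)
    (h : Complex.exp (Complex.I * c) = Complex.exp (Complex.I * θ)) :
    c = θ ∨ (c = -Real.pi ∧ θ = Real.pi) := by
  obtain ⟨n, hn⟩ := (exp_I_eq_iff c θ).mp h
  have hπ := Real.pi_pos
  have h1 : -1 ≤ n := by
    have : (-1 : ℝ) ≤ n := by nlinarith [hc.1, hθ.2]
    exact_mod_cast this
  have h2 : n ≤ 0 := by
    have : (n : ℝ) < 1 := by nlinarith [hc.2, hθ.1]
    have : n < 1 := by exact_mod_cast this
    omega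
  interval_cases n
  · right
    have hc' : c = θ - 2 * Real.pi := by rw [hn]; push_cast; ring
    constructor
    · nlinarith [hc.1, hθ.2]
    · nlinarith [hc.1, hθ.2]
  · left; simpa using hn

lemma exists_antitone_extension (f : ℝ → ℝ) (C : ℝ)
    (hf : AntitoneOn f (Set.Ico 0 1)) (hC : ∀ t ∈ Set.Ico (0:ℝ) 1, -C ≤ f t) :
    ∃ F : ℝ → ℝ, Antitone F ∧ ∀ t ∈ Set.Ico (0:ℝ) 1, F t = f t := by
  refine ⟨fun t => if t < 0 then f 0 else if t < 1 then f t else -C, ?_, ?_⟩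
  · intro a b hab
    by_cases hb0 : b < 0
    · have ha0 : a < 0 := lt_of_le_of_lt hab hb0
      simp [ha0, hb0]
    · push_neg at hb0
      by_cases hb1 : b < 1
      · have hbP : b ∈ Set.Ico (0:ℝ) 1 := ⟨hb0, hb1⟩
        by_cases ha0 : a < 0
        · simp only [ha0, if_true, (not_lt_of_ge hb0), if_false, hb1, if_true]
          exact hf ⟨le_refl 0, one_pos⟩ hbP hb0
        · push_neg at ha0
          have ha1 : a < 1 := lt_of_le_of_lt hab hb1
          simp only [(not_lt_of_ge ha0), if_false, ha1, if_true, (not_lt_of_ge hb0), hb1]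
          exact hf ⟨ha0, ha1⟩ hbP hab
      · push_neg at hb1
        simp only [(not_lt_of_ge hb0), if_false, (not_lt_of_ge hb1)]
        by_cases ha0 : a < 0
        · simp only [ha0, if_true]
          exact hC 0 ⟨le_refl 0, one_pos⟩
        · push_neg at ha0
          by_cases ha1 : a < 1
          · simp only [(not_lt_of_ge ha0), if_false, ha1, if_true]
            exact hC a ⟨ha0, ha1⟩
          · simp [(not_lt_of_ge ha0), ha1]
  · intro t ht
    simp [(not_lt_of_ge ht.1), ht.2]

lemma exists_subset_volume_eq {A : Set ℝ} (hA : MeasurableSet A)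
    (hA1 : A ⊆ Set.Ico 0 1) {m : ENNReal} (hm : m ≤ volume A) :
    ∃ B : Set ℝ, B ⊆ A ∧ MeasurableSet B ∧ volume B = m := by
  have hvolA : volume A ≠ ⊤ := by
    refine ne_top_of_le_ne_top ?_ (measure_mono hA1)
    rw [Real.volume_Ico]; exact ENNReal.ofReal_ne_top
  have hfin : ∀ c : ℝ, volume (A ∩ Set.Iio c) ≠ ⊤ :=
    fun c => ne_top_of_le_ne_top hvolA (measure_mono Set.inter_subset_left)
  set φ : ℝ → ℝ := fun c => (volume (A ∩ Set.Iio c)).toReal with hφ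
  have hmono : Monotone φ := by
    intro c d hcd
    exact ENNReal.toReal_mono (hfin d)
      (measure_mono (Set.inter_subset_inter_right _ (Set.Iio_subset_Iio hcd)))
  have hlip : ∀ c d : ℝ, c ≤ d → φ d ≤ φ c + (d - c) := by
    intro c d hcd
    have hsub : A ∩ Set.Iio d ⊆ (A ∩ Set.Iio c) ∪ Set.Ico c d := by
      rintro x ⟨hxA, hxd⟩
      rcases lt_or_ge x c with h | h
      · exact Or.inl ⟨hxA, h⟩
      · exact Or.inr ⟨h, hxd⟩
    have h1 : volume (A ∩ Set.Iio d) ≤ volume (A ∩ Set.Iio c) + ENNReal.ofReal (d - c) := by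
      calc volume (A ∩ Set.Iio d) ≤ volume ((A ∩ Set.Iio c) ∪ Set.Ico c d) := measure_mono hsub
        _ ≤ volume (A ∩ Set.Iio c) + volume (Set.Ico c d) := measure_union_le _ _
        _ = volume (A ∩ Set.Iio c) + ENNReal.ofReal (d - c) := by rw [Real.volume_Ico]
    have h2 := ENNReal.toReal_mono (by
        exact ENNReal.add_ne_top.mpr ⟨hfin c, ENNReal.ofReal_ne_top⟩) h1
    rw [ENNReal.toReal_add (hfin c) ENNReal.ofReal_ne_top,
      ENNReal.toReal_ofReal (by linarith)] at h2
    exact h2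
  have hcont : Continuous φ := by
    refine LipschitzWith.continuous (K := 1) (LipschitzWith.of_dist_le_mul (fun c d => ?_))
    rw [NNReal.coe_one, one_mul, Real.dist_eq, Real.dist_eq]
    rcases le_total c d with h | h
    · rw [abs_of_nonpos (by linarith [hmono h] : φ c - φ d ≤ 0),
        abs_of_nonpos (by linarith : c - d ≤ 0)]
      linarith [hlip c d h]
    · rw [abs_of_nonneg (by linarith [hmono h] : (0:ℝ) ≤ φ c - φ d),
        abs_of_nonneg (by linarith : (0:ℝ) ≤ c - d)]
      linarith [hlip d c h]
  have hφ0 : φ 0 = 0 := by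
    have : A ∩ Set.Iio (0:ℝ) = ∅ := by
      ext x
      simp only [Set.mem_inter_iff, Set.mem_Iio, Set.mem_empty_iff_false, iff_false]
      rintro ⟨hxA, hx0⟩
      exact absurd (hA1 hxA).1 (not_le.mpr hx0)
    simp [hφ, this]
  have hφ1 : φ 1 = (volume A).toReal := by
    have : A ∩ Set.Iio (1:ℝ) = A := by
      apply Set.inter_eq_self_of_subset_left
      intro x hx; exact (hA1 hx).2
    simp only [hφ]; rw [this]
  have hmtop : m ≠ ⊤ := ne_top_of_le_ne_top hvolA hm
  have hmem : m.toReal ∈ Set.Icc (φ 0) (φ 1) := by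
    rw [hφ0, hφ1]
    exact ⟨ENNReal.toReal_nonneg, ENNReal.toReal_mono hvolA hm⟩
  obtain ⟨c, _, hc⟩ := intermediate_value_Icc zero_le_one hcont.continuousOn hmem
  refine ⟨A ∩ Set.Iio c, Set.inter_subset_left, hA.inter measurableSet_Iio, ?_⟩
  have := (ENNReal.toReal_eq_toReal_iff' (hfin c) hmtop).mp hc
  exact this


lemma antitone_rearrangement_at (g G : ℝ → ℝ) (hG : Antitone G)
    (hGg : ∀ t ∈ Set.Ico (0:ℝ) 1, G t = g t)
    {t : ℝ} (ht : t ∈ Set.Ioo (0:ℝ) 1) (hcont : ContinuousAt G t) :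
    decreasingRearrangement g t = g t := by
  obtain ⟨ht0, ht1⟩ := ht
  have htP : t ∈ Set.Ico (0:ℝ) 1 := ⟨ht0.le, ht1⟩
  have hmemD : volume {x ∈ Set.Ico (0:ℝ) 1 | g t < g x} ≤ ENNReal.ofReal t := by
    have hsub : {x ∈ Set.Ico (0:ℝ) 1 | g t < g x} ⊆ Set.Ico 0 t := by
      rintro x ⟨hxP, hx⟩
      refine ⟨hxP.1, ?_⟩
      by_contra hcon
      push_neg at hcon
      have hle : g x ≤ g t := by
        rw [← hGg x hxP, ← hGg t htP]; exact hG hcon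
      exact absurd hx (not_lt.mpr hle)
    calc volume {x ∈ Set.Ico (0:ℝ) 1 | g t < g x} ≤ volume (Set.Ico 0 t) :=
          measure_mono hsub
      _ = ENNReal.ofReal t := by rw [Real.volume_Ico, sub_zero]
  have hlb : ∀ s ∈ {s : ℝ | volume {x ∈ Set.Ico (0:ℝ) 1 | s < g x} ≤ ENNReal.ofReal t},
      g t ≤ s := by
    intro s hs
    by_contra hcon
    push_neg at hcon
    have hGt : s < G t := by rw [hGg t htP]; exact hcon
    have hnh : G ⁻¹' Set.Ioi s ∈ nhds t := hcont (Ioi_mem_nhds hGt)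
    obtain ⟨ε, hε, hball⟩ := Metric.mem_nhds_iff.mp hnh
    set u := min (t + ε/2) ((t+1)/2) with hu
    have htu : t < u := lt_min (by linarith) (by linarith)
    have hu1 : u < 1 := lt_of_le_of_lt (min_le_right _ _) (by linarith)
    have hGu : s < G u := by
      have hdu : u - t ≤ ε/2 := by
        have := min_le_left (t + ε/2) ((t+1)/2); linarith
      have : u ∈ Metric.ball t ε := by
        rw [Metric.mem_ball, Real.dist_eq, abs_of_pos (sub_pos.2 htu)]; linarith
      exact hball this
    have hsub : Set.Ico (0:ℝ) u ⊆ {x ∈ Set.Ico (0:ℝ) 1 | s < g x} := by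
      rintro x ⟨hx0, hxu⟩
      have hxP : x ∈ Set.Ico (0:ℝ) 1 := ⟨hx0, hxu.trans hu1⟩
      refine ⟨hxP, ?_⟩
      have h1 : G u ≤ G x := hG hxu.le
      have h2 : s < G x := lt_of_lt_of_le hGu h1
      rwa [hGg x hxP] at h2
    have hge : ENNReal.ofReal u ≤ volume {x ∈ Set.Ico (0:ℝ) 1 | s < g x} := by
      have h3 : volume (Set.Ico (0:ℝ) u) ≤ volume {x ∈ Set.Ico (0:ℝ) 1 | s < g x} :=
        measure_mono hsub
      rwa [Real.volume_Ico, sub_zero] at h3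
    have hut : u ≤ t := by
      have := le_trans hge hs
      rwa [ENNReal.ofReal_le_ofReal_iff ht0.le] at this
    exact absurd hut (not_le.mpr htu)
  rw [decreasingRearrangement]
  exact le_antisymm (csInf_le ⟨g t, hlb⟩ hmemD) (le_csInf ⟨g t, hmemD⟩ hlb)

lemma antitone_rearrangement_ae (g G : ℝ → ℝ) (hG : Antitone G)
    (hGg : ∀ t ∈ Set.Ico (0:ℝ) 1, G t = g t) :
    ∀ᵐ t ∂(volume.restrict (Set.Ico (0:ℝ) 1)),
      decreasingRearrangement g t = g t := by
  have hN : Set.Countable ({x | ¬ContinuousAt G x} ∪ {0}) :=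
    (hG.countable_not_continuousAt).union (Set.countable_singleton 0)
  have hN0 : volume ({x : ℝ | ¬ContinuousAt G x} ∪ {0}) = 0 :=
    hN.measure_zero _
  have hae : ∀ᵐ x ∂(volume.restrict (Set.Ico (0:ℝ) 1)),
      x ∉ ({x : ℝ | ¬ContinuousAt G x} ∪ {0}) := by
    refine ae_restrict_of_ae ?_
    rw [ae_iff]
    refine measure_mono_null ?_ hN0
    intro a ha
    exact not_not.mp ha
  have hmem : ∀ᵐ x ∂(volume.restrict (Set.Ico (0:ℝ) 1)), x ∈ Set.Ico (0:ℝ) 1 :=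
    ae_restrict_mem measurableSet_Ico
  filter_upwards [hae, hmem] with x hx hxP
  have hx0 : x ≠ 0 := fun h => hx (Or.inr (by simp [h]))
  have hxc : ContinuousAt G x := by
    by_contra h; exact hx (Or.inl h)
  exact antitone_rearrangement_at g G hG hGg
    ⟨lt_of_le_of_ne hxP.1 (Ne.symm hx0), hxP.2⟩ hxc

/-- Let `f, g : [0,1) → ℝ` be bounded non-increasing functions with `‖g‖_∞ ≤ π` such
that for every arc `I` of the unit circle the sets `{t : e^{i f(t)} ∈ I}` and
`{t : e^{i g(t)} ∈ I}` have the same Lebesgue measure (arcs being the images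
`{e^{iθ} : θ ∈ J}` of intervals `J ⊆ ℝ`). Then there is a measurable function
`ḡ : [0,1) → ℝ` with `e^{i f(t)} = e^{i ḡ(t)}` for every `t ∈ [0,1)` whose decreasing
rearrangement equals `g` almost everywhere on `[0,1)`. -/
theorem exists_measurable_log_with_rearrangement
    (f g : ℝ → ℝ)
    (hf_anti : AntitoneOn f (Set.Ico (0:ℝ) 1))
    (hg_anti : AntitoneOn g (Set.Ico (0:ℝ) 1))
    (hf_bdd : ∃ C : ℝ, ∀ t ∈ Set.Ico (0:ℝ) 1, |f t| ≤ C)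
    (hg_bdd : ∀ t ∈ Set.Ico (0:ℝ) 1, |g t| ≤ Real.pi)
    (harc : ∀ J : Set ℝ, J.OrdConnected →
      volume {t ∈ Set.Ico (0:ℝ) 1 |
          ∃ θ ∈ J, Complex.exp (Complex.I * (f t : ℂ)) =
            Complex.exp (Complex.I * (θ : ℂ))} =
      volume {t ∈ Set.Ico (0:ℝ) 1 |
          ∃ θ ∈ J, Complex.exp (Complex.I * (g t : ℂ)) =
            Complex.exp (Complex.I * (θ : ℂ))}) :
    ∃ gb : ℝ → ℝ, Measurable gb ∧
      (∀ t ∈ Set.Ico (0:ℝ) 1,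
        Complex.exp (Complex.I * (f t : ℂ)) = Complex.exp (Complex.I * (gb t : ℂ))) ∧
      (∀ᵐ t ∂(volume.restrict (Set.Ico (0:ℝ) 1)),
        decreasingRearrangement gb t = g t) := by
  classical
  obtain ⟨C, hC⟩ := hf_bdd
  have hπ := Real.pi_pos
  obtain ⟨F, hF, hFf⟩ := exists_antitone_extension f C hf_anti
    (fun t ht => (abs_le.mp (hC t ht)).1)
  obtain ⟨G, hG, hGg⟩ := exists_antitone_extension g Real.pi hg_anti
    (fun t ht => (abs_le.mp (hg_bdd t ht)).1)
  -- the representative of f (extended to F) in (-π, π]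
  set k : ℝ → ℤ := fun t => ⌈(F t - Real.pi)/(2*Real.pi)⌉ with hk
  set gb0 : ℝ → ℝ := fun t => F t - 2*Real.pi * k t with hgb0def
  have h2pi : (0:ℝ) < 2*Real.pi := by linarith
  have hgb0_mem : ∀ t, gb0 t ∈ Set.Ioc (-Real.pi) Real.pi := by
    intro t
    have h1 : (F t - Real.pi)/(2*Real.pi) ≤ (k t : ℝ) := Int.le_ceil _
    have h2 : (k t : ℝ) < (F t - Real.pi)/(2*Real.pi) + 1 := Int.ceil_lt_add_one _
    have h1' := (div_le_iff₀ h2pi).mp h1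
    have h2' := (lt_div_iff₀ h2pi).mp (by linarith : ((k t : ℝ) - 1) < (F t - Real.pi)/(2*Real.pi))
    constructor
    · simp only [hgb0def]; nlinarith
    · simp only [hgb0def]; nlinarith
  have hgb0_exp : ∀ t, Complex.exp (Complex.I * (gb0 t : ℂ)) =
      Complex.exp (Complex.I * (F t : ℂ)) :=
    fun t => (exp_I_eq_iff _ _).mpr ⟨-(k t), by simp only [hgb0def]; push_cast; ring⟩
  have hexpf : ∀ t ∈ Set.Ico (0:ℝ) 1, Complex.exp (Complex.I * (f t : ℂ)) =
      Complex.exp (Complex.I * (gb0 t : ℂ)) := by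
    intro t ht
    rw [← hFf t ht]
    exact (hgb0_exp t).symm
  have hgb0_meas : Measurable gb0 := by
    have hFm : Measurable F := hF.measurable
    apply hFm.sub
    apply measurable_const.mul
    exact measurable_from_top.comp ((hFm.sub measurable_const).div_const _).ceil
  have hgIcc : ∀ t ∈ Set.Ico (0:ℝ) 1, g t ∈ Set.Icc (-Real.pi) Real.pi :=
    fun t ht => abs_le.mp (hg_bdd t ht)
  -- measurability of distribution sets of g
  have hSg_meas : ∀ s : ℝ, MeasurableSet {x ∈ Set.Ico (0:ℝ) 1 | s < g x} := by
    intro s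
    apply Set.OrdConnected.measurableSet
    constructor
    rintro x ⟨hxP, _⟩ y ⟨hyP, hyg⟩ z hz
    have hzP : z ∈ Set.Ico (0:ℝ) 1 := ⟨le_trans hxP.1 hz.1, lt_of_le_of_lt hz.2 hyP.2⟩
    exact ⟨hzP, lt_of_lt_of_le hyg (hg_anti hzP hyP hz.2)⟩
  have hSm_eq : {x ∈ Set.Ico (0:ℝ) 1 | g x = -Real.pi}
      = {x ∈ Set.Ico (0:ℝ) 1 | g x ≤ -Real.pi} := by
    ext x
    constructor
    · rintro ⟨hxP, hx⟩; exact ⟨hxP, le_of_eq hx⟩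
    · rintro ⟨hxP, hx⟩; exact ⟨hxP, le_antisymm hx (hgIcc x hxP).1⟩
  have hSm_meas : MeasurableSet {x ∈ Set.Ico (0:ℝ) 1 | g x = -Real.pi} := by
    rw [hSm_eq]
    apply Set.OrdConnected.measurableSet
    constructor
    rintro x ⟨hxP, hxg⟩ y ⟨hyP, _⟩ z hz
    have hzP : z ∈ Set.Ico (0:ℝ) 1 := ⟨le_trans hxP.1 hz.1, lt_of_le_of_lt hz.2 hyP.2⟩
    exact ⟨hzP, le_trans (hg_anti hxP hzP hz.1) hxg⟩
  set m : ENNReal := volume {t ∈ Set.Ico (0:ℝ) 1 | g t = -Real.pi} with hm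
  have hm_fin : m ≠ ⊤ := by
    refine ne_top_of_le_ne_top ?_ (measure_mono (Set.sep_subset _ _))
    rw [Real.volume_Ico]
    exact ENNReal.ofReal_ne_top
  -- set identifications for arcs Ioc s π
  have hE1 : ∀ s : ℝ, -Real.pi ≤ s →
      {t ∈ Set.Ico (0:ℝ) 1 | ∃ θ ∈ Set.Ioc s Real.pi,
        Complex.exp (Complex.I * (f t : ℂ)) = Complex.exp (Complex.I * (θ : ℂ))}
      = {t ∈ Set.Ico (0:ℝ) 1 | gb0 t ∈ Set.Ioc s Real.pi} := by
    intro s hs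
    ext t
    constructor
    · rintro ⟨htP, θ, hθ, hexp⟩
      refine ⟨htP, ?_⟩
      have h1 : Complex.exp (Complex.I * (gb0 t : ℂ)) = Complex.exp (Complex.I * (θ : ℂ)) :=
        (hexpf t htP).symm.trans hexp
      have h2 : gb0 t = θ :=
        exp_inj_Ioc (hgb0_mem t) ⟨lt_of_le_of_lt hs hθ.1, hθ.2⟩ h1
      rw [h2]; exact hθ
    · rintro ⟨htP, hmem⟩
      exact ⟨htP, gb0 t, hmem, hexpf t htP⟩
  have hE2 : ∀ s : ℝ, -Real.pi ≤ s → s < Real.pi →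
      {t ∈ Set.Ico (0:ℝ) 1 | ∃ θ ∈ Set.Ioc s Real.pi,
        Complex.exp (Complex.I * (g t : ℂ)) = Complex.exp (Complex.I * (θ : ℂ))}
      = {t ∈ Set.Ico (0:ℝ) 1 | s < g t} ∪ {t ∈ Set.Ico (0:ℝ) 1 | g t = -Real.pi} := by
    intro s hs hs2
    ext t
    constructor
    · rintro ⟨htP, θ, hθ, hexp⟩
      have hθ' : θ ∈ Set.Ioc (-Real.pi) Real.pi := ⟨lt_of_le_of_lt hs hθ.1, hθ.2⟩
      rcases exp_g_cases (hgIcc t htP) hθ' hexp with h | h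
      · exact Or.inl ⟨htP, by rw [h]; exact hθ.1⟩
      · exact Or.inr ⟨htP, h.1⟩
    · rintro (⟨htP, hgt⟩ | ⟨htP, hgt⟩)
      · exact ⟨htP, g t, ⟨hgt, (hgIcc t htP).2⟩, rfl⟩
      · refine ⟨htP, Real.pi, ⟨hs2, le_refl _⟩, ?_⟩
        rw [hgt]
        exact (exp_I_eq_iff _ _).mpr ⟨-1, by push_cast; ring⟩
  have hdisj : ∀ s : ℝ, -Real.pi ≤ s →
      Disjoint {t ∈ Set.Ico (0:ℝ) 1 | s < g t} {t ∈ Set.Ico (0:ℝ) 1 | g t = -Real.pi} := by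
    intro s hs
    rw [Set.disjoint_left]
    rintro t ⟨_, h1⟩ ⟨_, h2⟩
    rw [h2] at h1
    exact absurd h1 (not_lt.mpr hs)
  have hkey1 : ∀ s : ℝ, -Real.pi ≤ s → s < Real.pi →
      volume {t ∈ Set.Ico (0:ℝ) 1 | gb0 t ∈ Set.Ioc s Real.pi}
        = volume {t ∈ Set.Ico (0:ℝ) 1 | s < g t} + m := by
    intro s hs hs2
    have h := harc (Set.Ioc s Real.pi) Set.ordConnected_Ioc
    rw [hE1 s hs, hE2 s hs hs2] at h
    rw [h, measure_union (hdisj s hs) hSm_meas]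
  -- the set where gb0 = π
  set A : Set ℝ := {t ∈ Set.Ico (0:ℝ) 1 | gb0 t = Real.pi} with hA
  have hA_sub : A ⊆ Set.Ico (0:ℝ) 1 := fun t ht => ht.1
  have hA_meas : MeasurableSet A := by
    have : A = Set.Ico (0:ℝ) 1 ∩ gb0 ⁻¹' {Real.pi} := by
      ext t; simp [hA, Set.mem_sep_iff, Set.mem_preimage, and_comm]
    rw [this]
    exact measurableSet_Ico.inter (hgb0_meas (measurableSet_singleton _))
  have hmA : m ≤ volume A := by
    have h := harc {Real.pi} Set.ordConnected_singleton
    have e1 : {t ∈ Set.Ico (0:ℝ) 1 | ∃ θ ∈ ({Real.pi} : Set ℝ),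
        Complex.exp (Complex.I * (f t : ℂ)) = Complex.exp (Complex.I * (θ : ℂ))} = A := by
      ext t
      constructor
      · rintro ⟨htP, θ, hθ, hexp⟩
        rw [Set.mem_singleton_iff] at hθ
        subst hθ
        exact ⟨htP, exp_inj_Ioc (hgb0_mem t) ⟨by linarith, le_refl _⟩
          ((hexpf t htP).symm.trans hexp)⟩
      · rintro ⟨htP, hgt⟩
        refine ⟨htP, Real.pi, rfl, ?_⟩
        rw [← hgt]
        exact hexpf t htP
    have e2 : {t ∈ Set.Ico (0:ℝ) 1 | ∃ θ ∈ ({Real.pi} : Set ℝ),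
        Complex.exp (Complex.I * (g t : ℂ)) = Complex.exp (Complex.I * (θ : ℂ))}
        = {t ∈ Set.Ico (0:ℝ) 1 | g t = Real.pi} ∪ {t ∈ Set.Ico (0:ℝ) 1 | g t = -Real.pi} := by
      ext t
      constructor
      · rintro ⟨htP, θ, hθ, hexp⟩
        rw [Set.mem_singleton_iff] at hθ
        subst hθ
        rcases exp_g_cases (hgIcc t htP) ⟨by linarith, le_refl _⟩ hexp with h' | h'
        · exact Or.inl ⟨htP, h'⟩
        · exact Or.inr ⟨htP, h'.1⟩
      · rintro (⟨htP, hgt⟩ | ⟨htP, hgt⟩)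
        · exact ⟨htP, Real.pi, rfl, by rw [hgt]⟩
        · refine ⟨htP, Real.pi, rfl, ?_⟩
          rw [hgt]
          exact (exp_I_eq_iff _ _).mpr ⟨-1, by push_cast; ring⟩
    rw [e1, e2] at h
    rw [hm, h]
    exact measure_mono Set.subset_union_right
  obtain ⟨B, hBA, hB_meas, hB_vol⟩ := exists_subset_volume_eq hA_meas hA_sub hmA
  -- the modified function
  set gb : ℝ → ℝ := B.piecewise (fun _ => -Real.pi)
    ((Set.Ico (0:ℝ) 1).piecewise gb0 (fun _ => 0)) with hgbdef
  have hgb_eq_of_mem : ∀ t ∈ B, gb t = -Real.pi := by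
    intro t ht
    simp [hgbdef, Set.piecewise_eq_of_mem _ _ _ ht]
  have hgb_eq_of_not_mem : ∀ t ∈ Set.Ico (0:ℝ) 1, t ∉ B → gb t = gb0 t := by
    intro t ht htB
    simp [hgbdef, Set.piecewise_eq_of_notMem _ _ _ htB, Set.piecewise_eq_of_mem _ _ _ ht]
  have hgb_meas : Measurable gb :=
    Measurable.piecewise hB_meas measurable_const
      (Measurable.piecewise measurableSet_Ico hgb0_meas measurable_const)
  -- key distribution identity
  have hkey : ∀ s : ℝ, volume {x ∈ Set.Ico (0:ℝ) 1 | s < gb x}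
      = volume {x ∈ Set.Ico (0:ℝ) 1 | s < g x} := by
    intro s
    rcases lt_or_ge s (-Real.pi) with hs | hs
    · have e1 : {x ∈ Set.Ico (0:ℝ) 1 | s < gb x} = Set.Ico (0:ℝ) 1 := by
        ext x
        simp only [Set.mem_sep_iff, and_iff_left_iff_imp]
        intro hx
        by_cases hxB : x ∈ B
        · rw [hgb_eq_of_mem x hxB]; linarith
        · rw [hgb_eq_of_not_mem x hx hxB]
          exact lt_trans hs (hgb0_mem x).1
      have e2 : {x ∈ Set.Ico (0:ℝ) 1 | s < g x} = Set.Ico (0:ℝ) 1 := by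
        ext x
        simp only [Set.mem_sep_iff, and_iff_left_iff_imp]
        intro hx
        exact lt_of_lt_of_le hs (hgIcc x hx).1
      rw [e1, e2]
    · rcases lt_or_ge s Real.pi with hs2 | hs2
      · have hBsub : B ⊆ {t ∈ Set.Ico (0:ℝ) 1 | gb0 t ∈ Set.Ioc s Real.pi} := by
          intro t ht
          have h1 := hBA ht
          exact ⟨h1.1, by rw [h1.2]; exact ⟨hs2, le_refl _⟩⟩
        have e1 : {x ∈ Set.Ico (0:ℝ) 1 | s < gb x}
            = {t ∈ Set.Ico (0:ℝ) 1 | gb0 t ∈ Set.Ioc s Real.pi} \ B := by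
          ext x
          constructor
          · rintro ⟨hxP, hxs⟩
            by_cases hxB : x ∈ B
            · rw [hgb_eq_of_mem x hxB] at hxs
              linarith
            · rw [hgb_eq_of_not_mem x hxP hxB] at hxs
              exact ⟨⟨hxP, hxs, (hgb0_mem x).2⟩, hxB⟩
          · rintro ⟨⟨hxP, hxs, _⟩, hxB⟩
            exact ⟨hxP, by rw [hgb_eq_of_not_mem x hxP hxB]; exact hxs⟩
        rw [e1, measure_diff hBsub hB_meas.nullMeasurableSet
          (by rw [hB_vol]; exact hm_fin), hkey1 s hs hs2, hB_vol,
          ENNReal.add_sub_cancel_right hm_fin]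
      · have e1 : {x ∈ Set.Ico (0:ℝ) 1 | s < gb x} = ∅ := by
          ext x
          simp only [Set.mem_sep_iff, Set.mem_empty_iff_false, iff_false, not_and]
          intro hx
          by_cases hxB : x ∈ B
          · rw [hgb_eq_of_mem x hxB]; push_neg; linarith
          · rw [hgb_eq_of_not_mem x hx hxB]; push_neg
            exact le_trans (hgb0_mem x).2 hs2
        have e2 : {x ∈ Set.Ico (0:ℝ) 1 | s < g x} = ∅ := by
          ext x
          simp only [Set.mem_sep_iff, Set.mem_empty_iff_false, iff_false, not_and]
          intro hx
          push_neg
          exact le_trans (hgIcc x hx).2 hs2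
        rw [e1, e2]
  have hre : decreasingRearrangement gb = decreasingRearrangement g := by
    funext t
    unfold decreasingRearrangement
    congr 1
    ext s
    simp only [Set.mem_setOf_eq, hkey s]
  refine ⟨gb, hgb_meas, ?_, ?_⟩
  · intro t ht
    by_cases htB : t ∈ B
    · have h1 : gb t = -Real.pi := hgb_eq_of_mem t htB
      have h2 : gb0 t = Real.pi := (hBA htB).2
      rw [h1, hexpf t ht, h2]
      exact (exp_I_eq_iff _ _).mpr ⟨1, by push_cast; ring⟩
    · rw [hgb_eq_of_not_mem t ht htB]
      exact hexpf t ht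
  · rw [hre]
    exact antitone_rearrangement_ae g G hG hGg
end

section
/- Let H be a complex separable Hilbert space and let z be a bounded self-adjoint operator on H with ‖z‖ ≤ π. If the operator e^{iz} − 1 is compact, then z is compact. -/
open Complex NormedSpace Polynomial

/-- If `a` is a selfadjoint compact operator and `ψ : ℝ → ℝ` is continuous with `ψ 0 = 0`,
then `cfc ψ a` is compact. -/
lemma cfc_isCompactOperator {H : Type*} [NormedAddCommGroup H] [InnerProductSpace ℂ H]
    [CompleteSpace H] (a : H →L[ℂ] H) (ha : IsSelfAdjoint a) (hc : IsCompactOperator ⇑a)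
    {ψ : ℝ → ℝ} (hψ : Continuous ψ) (h0 : ψ 0 = 0) : IsCompactOperator ⇑(cfc ψ a) := by
  rcases subsingleton_or_nontrivial H with hH | hH
  · refine ⟨{0}, isCompact_singleton, ?_⟩
    have : (⇑(cfc ψ a)) ⁻¹' {0} = Set.univ :=
      Set.eq_univ_of_forall fun x => by simp [Subsingleton.elim ((cfc ψ a) x) (0 : H)]
    rw [this]; exact Filter.univ_mem
  set r := ‖a‖ with hrdef
  have hr : (0:ℝ) ≤ r := norm_nonneg a
  have h0r : (0:ℝ) ∈ Set.Icc (-r) r := by constructor <;> linarith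
  have hσ : spectrum ℝ a ⊆ Set.Icc (-r) r := by
    intro x hx
    have h := spectrum.subset_closedBall_norm a hx
    simpa [Real.closedBall_eq_Icc] using h
  have key : ∀ ε > (0:ℝ), ∃ T : H →L[ℂ] H, IsCompactOperator ⇑T ∧ ‖cfc ψ a - T‖ ≤ ε := by
    intro ε hε
    set f : C(Set.Icc (-r) r, ℝ) := ⟨fun x => ψ x, hψ.comp continuous_subtype_val⟩ with hf
    obtain ⟨p, hp⟩ := exists_polynomial_near_continuousMap (-r) r f (ε/2) (by positivity)
    set q : ℝ[X] := p - C (p.eval 0) with hq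
    have hq0 : q.coeff 0 = 0 := by
      simp [hq, coeff_zero_eq_eval_zero]
    have hnear : ∀ x ∈ Set.Icc (-r) r, |ψ x - q.eval x| ≤ ε := by
      intro x hx
      have h1 : |p.eval x - ψ x| < ε/2 := by
        have := (p.toContinuousMapOn (Set.Icc (-r) r) - f).norm_coe_le_norm ⟨x, hx⟩
        calc |p.eval x - ψ x| ≤ ‖p.toContinuousMapOn (Set.Icc (-r) r) - f‖ := by
              simpa [Real.norm_eq_abs, hf] using this
          _ < ε/2 := hp
      have h2 : |p.eval 0 - ψ 0| < ε/2 := by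
        have := (p.toContinuousMapOn (Set.Icc (-r) r) - f).norm_coe_le_norm ⟨0, h0r⟩
        calc |p.eval 0 - ψ 0| ≤ ‖p.toContinuousMapOn (Set.Icc (-r) r) - f‖ := by
              simpa [Real.norm_eq_abs, hf] using this
          _ < ε/2 := hp
      rw [h0] at h2
      have hqx : q.eval x = p.eval x - p.eval 0 := by simp [hq]
      rw [hqx]
      calc |ψ x - (p.eval x - p.eval 0)| = |(ψ x - p.eval x) + p.eval 0| := by ring_nf
        _ ≤ |ψ x - p.eval x| + |p.eval 0| := abs_add_le _ _
        _ ≤ ε/2 + ε/2 := by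
            rw [abs_sub_comm] at h1
            simp only [sub_zero] at h2
            exact add_le_add h1.le h2.le
        _ = ε := by ring
    refine ⟨aeval a q, ?_, ?_⟩
    · have heq : aeval a q = a * aeval a q.divX := by
        conv_lhs => rw [← X_mul_divX_add q]
        simp [hq0]
      rw [heq]
      exact hc.comp_clm (aeval a q.divX)
    · have hcq : cfc ψ a - aeval a q = cfc (fun x => ψ x - q.eval x) a := by
        rw [← cfc_polynomial q a, ← cfc_sub ..]
      rw [hcq]
      exact norm_cfc_le hε.le fun x hx => by
        simpa [Real.norm_eq_abs] using hnear x (hσ hx)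
  have hclosed := isClosed_setOf_isCompactOperator (σ₁₂ := RingHom.id ℂ) (M₁ := H) (M₂ := H)
  have hmem : cfc ψ a ∈ closure {T : H →L[ℂ] H | IsCompactOperator ⇑T} := by
    rw [Metric.mem_closure_iff]
    intro ε hε
    obtain ⟨T, hT, hTnorm⟩ := key (ε/2) (by positivity)
    exact ⟨T, hT, lt_of_le_of_lt (by simpa [dist_eq_norm] using hTnorm) (by linarith)⟩
  exact hclosed.closure_subset hmem

set_option maxHeartbeats 1000000 in
/-- If `z` is a bounded self-adjoint operator on a complex separable Hilbert space
with `‖z‖ ≤ π` and `e^{iz} - 1` is compact, then `z` is compact. -/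
theorem compact_of_exp_sub_one_compact
    {H : Type*} [NormedAddCommGroup H] [InnerProductSpace ℂ H]
    [CompleteSpace H] [TopologicalSpace.SeparableSpace H]
    (z : H →L[ℂ] H) (hzsa : IsSelfAdjoint z) (hznorm : ‖z‖ ≤ Real.pi)
    (hcomp : IsCompactOperator (⇑(NormedSpace.exp (Complex.I • z) - 1))) :
    IsCompactOperator (⇑z) := by
  rcases subsingleton_or_nontrivial H with hH | hH
  · refine ⟨{0}, isCompact_singleton, ?_⟩
    have : (⇑z) ⁻¹' {0} = Set.univ :=
      Set.eq_univ_of_forall fun x => by simp [Subsingleton.elim (z x) (0 : H)]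
    rw [this]; exact Filter.univ_mem
  have hzn : IsStarNormal z := hzsa.isStarNormal
  have hIz : IsStarNormal (I • z) := by
    constructor
    have hstar : star (I • z) = (-I) • z := by
      rw [star_smul, Complex.star_def, Complex.conj_I, hzsa.star_eq]
    rw [hstar]
    exact ((Commute.refl z).smul_left (-I)).smul_right I
  -- `exp ℂ (I • z)` as continuous functional calculus
  have hexp : NormedSpace.exp (I • z) = cfc (fun w : ℂ => Complex.exp (w * I)) z := by
    have h2 : (fun w : ℂ => Complex.exp (w * I)) = fun w : ℂ => Complex.exp (I * w) := by
      funext w; rw [mul_comm]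
    rw [h2, cfc_comp' Complex.exp (fun w : ℂ => I * w) z (by fun_prop) (by fun_prop),
      cfc_const_mul_id I z, CFC.complex_exp_eq_normedSpace_exp hIz]
  set f₁ : ℂ → ℂ := fun w => Complex.exp (w * I) - 1 with hf₁
  set K : H →L[ℂ] H := NormedSpace.exp (I • z) - 1 with hKdef
  have hKcfc : K = cfc f₁ z := by
    rw [hKdef, hexp, hf₁]
    rw [cfc_sub (fun w : ℂ => Complex.exp (w * I)) (fun _ : ℂ => (1:ℂ)) z (by fun_prop)
      (by fun_prop)]
    simp [cfc_const (1:ℂ) z]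
  set a : H →L[ℂ] H := K * star K with hadef
  have hasa : IsSelfAdjoint a := by
    rw [IsSelfAdjoint, hadef, star_mul, star_star]
  set g : ℂ → ℂ := fun w => f₁ w * star (f₁ w) with hg
  have hacfc : a = cfc g z := by
    rw [hadef, hKcfc, hg]
    rw [cfc_mul f₁ (fun w => star (f₁ w)) z (by fun_prop) (by fun_prop),
      cfc_star f₁ z]
  have hacomp : IsCompactOperator ⇑a := by
    have h3 : ⇑a = ⇑K ∘ ⇑(star K) := rfl
    rw [h3]
    exact hcomp.comp_clm (star K)
  -- the key function
  set φ : ℝ → ℝ := fun x => Real.sqrt (Real.arccos (1 - x / 2)) with hφ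
  have hφc : Continuous φ := by
    apply Real.continuous_sqrt.comp
    exact Real.continuous_arccos.comp (by continuity)
  have hφ0 : φ 0 = 0 := by
    simp [hφ, Real.arccos_one]
  have hbcomp : IsCompactOperator ⇑(cfc φ a) := cfc_isCompactOperator a hasa hacomp hφc hφ0
  -- identify `cfc φ a` with `cfc (fun t => √|t|) z`
  have hb : cfc φ a = cfc (fun t : ℝ => Real.sqrt |t|) z := by
    rw [cfc_real_eq_complex φ hasa, hacfc,
      ← cfc_comp' (fun w : ℂ => (φ w.re : ℂ)) g z (by fun_prop) (by fun_prop)]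
    rw [cfc_real_eq_complex (fun t : ℝ => Real.sqrt |t|) hzsa]
    apply cfc_congr
    intro w hw
    have hwre : w = (w.re : ℂ) := hzsa.mem_spectrum_eq_re hw
    have hwnorm : ‖w‖ ≤ Real.pi :=
      le_trans (spectrum.norm_le_norm_of_mem hw) hznorm
    set t : ℝ := w.re with ht
    have htpi : |t| ≤ Real.pi := by
      have : |t| ≤ ‖w‖ := by
        rw [hwre]; simp
      linarith
    have hgw : g w = ((2 - 2 * Real.cos t : ℝ) : ℂ) := by
      have he : Complex.exp (w * I) = Complex.exp ((t : ℂ) * I) := by rw [← hwre]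
      have h4 : g w = f₁ w * (starRingEnd ℂ) (f₁ w) := rfl
      rw [h4, Complex.mul_conj, hf₁]
      simp only [he]
      rw [Complex.exp_mul_I]
      have hcos : Complex.cos (t : ℂ) = ((Real.cos t : ℝ) : ℂ) := (Complex.ofReal_cos t).symm
      have hsin : Complex.sin (t : ℂ) = ((Real.sin t : ℝ) : ℂ) := (Complex.ofReal_sin t).symm
      rw [hcos, hsin]
      have : ((Real.cos t : ℝ) : ℂ) + ((Real.sin t : ℝ) : ℂ) * I - 1
          = ((Real.cos t - 1 : ℝ) : ℂ) + ((Real.sin t : ℝ) : ℂ) * I := by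
        push_cast; ring
      rw [this, Complex.normSq_add_mul_I]
      have hh : (Real.cos t - 1) ^ 2 + Real.sin t ^ 2 = 2 - 2 * Real.cos t := by
        have := Real.sin_sq_add_cos_sq t
        nlinarith
      rw [hh]
    show (φ (g w).re : ℂ) = (Real.sqrt |(w.re : ℝ)| : ℂ)
    rw [hgw]
    have hre : ((2 - 2 * Real.cos t : ℝ) : ℂ).re = 2 - 2 * Real.cos t := Complex.ofReal_re _
    rw [hre]
    have harc : Real.arccos (1 - (2 - 2 * Real.cos t) / 2) = |t| := by
      have h5 : 1 - (2 - 2 * Real.cos t) / 2 = Real.cos t := by ring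
      rw [h5]
      rcases le_or_gt 0 t with h6 | h6
      · rw [_root_.abs_of_nonneg h6]
        exact Real.arccos_cos h6 (by rw [_root_.abs_of_nonneg h6] at htpi; exact htpi)
      · rw [_root_.abs_of_neg h6]
        rw [← Real.cos_neg]
        exact Real.arccos_cos (by linarith) (by rw [_root_.abs_of_neg h6] at htpi; linarith)
    rw [hφ]
    simp only []
    rw [harc]
  -- write `z = c * cfc φ a`
  set c : H →L[ℂ] H := cfc (fun t : ℝ => Real.sqrt t - Real.sqrt (-t)) z with hc
  have hzfact : z = c * cfc φ a := by
    rw [hb, hc]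
    rw [← cfc_mul (fun t : ℝ => Real.sqrt t - Real.sqrt (-t)) (fun t : ℝ => Real.sqrt |t|) z
      (by fun_prop) (by fun_prop)]
    have hfun : (fun t : ℝ => (Real.sqrt t - Real.sqrt (-t)) * Real.sqrt |t|)
        = fun t : ℝ => t := by
      funext t
      rcases le_or_gt 0 t with h6 | h6
      · have h7 : Real.sqrt (-t) = 0 := Real.sqrt_eq_zero_of_nonpos (by linarith)
        rw [_root_.abs_of_nonneg h6, h7, sub_zero, Real.mul_self_sqrt h6]
      · have h7 : Real.sqrt t = 0 := Real.sqrt_eq_zero_of_nonpos h6.le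
        rw [_root_.abs_of_neg h6, h7, zero_sub, neg_mul, Real.mul_self_sqrt (by linarith),
          neg_neg]
    rw [hfun]
    exact (cfc_id' ℝ z).symm
  rw [hzfact]
  have h7 : ⇑(c * cfc φ a) = ⇑c ∘ ⇑(cfc φ a) := rfl
  rw [h7]
  exact hbcomp.clm_comp c
end

section
/- Let H be a complex separable Hilbert space, let z be a bounded self-adjoint operator on H with ‖z‖ ≤ π, let 0 < ε < π be such that neither ε nor −ε belongs to the spectrum of z, and let p = E_z((−ε, ε)) be the spectral projection of z corresponding to the interval (−ε, ε). Then the operator (1 − p) + p e^{iz} has spectrum contained in ℂ minus the ray (−∞, 0], and its logarithm via the principal branch (defined by holomorphic functional calculus) satisfies log((1 − p) + p e^{iz}) = i z p. -/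
noncomputable section

/-- The spectral projection `E_z((-ε, ε))` of a self-adjoint operator `z` associated to
the interval `(-ε, ε)`, obtained by applying the functional calculus to the indicator
function of `(-ε, ε)` (which is continuous on the spectrum when `±ε ∉ σ(z)`). -/
def spectralProjIoo {H : Type*} [NormedAddCommGroup H] [InnerProductSpace ℂ H]
    [CompleteSpace H] (z : H →L[ℂ] H) (ε : ℝ) : H →L[ℂ] H :=
  cfc (fun t : ℝ => if t ∈ Set.Ioo (-ε) ε then (1 : ℝ) else 0) z

/-- Let `z` be a bounded self-adjoint operator with `‖z‖ ≤ π`, let `0 < ε < π` with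
`±ε ∉ σ(z)`, and let `p = E_z((-ε, ε))` be the corresponding spectral projection.
Then the operator `(1 - p) + p e^{iz}` has spectrum disjoint from the ray `(-∞, 0]`,
and its principal-branch logarithm (via functional calculus) equals `i z p`. -/
theorem log_of_one_sub_proj_add_proj_exp
    {H : Type*} [NormedAddCommGroup H] [InnerProductSpace ℂ H]
    [CompleteSpace H] [TopologicalSpace.SeparableSpace H]
    (z : H →L[ℂ] H) (hzsa : IsSelfAdjoint z) (hznorm : ‖z‖ ≤ Real.pi)
    (ε : ℝ) (hε0 : 0 < ε) (hεπ : ε < Real.pi)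
    (hε : (ε : ℝ) ∉ spectrum ℝ z) (hε' : (-ε : ℝ) ∉ spectrum ℝ z) :
    spectrum ℂ ((1 - spectralProjIoo z ε) +
        spectralProjIoo z ε * NormedSpace.exp (Complex.I • z)) ∩
      {w : ℂ | w.im = 0 ∧ w.re ≤ 0} = ∅ ∧
    cfc Complex.log
        ((1 - spectralProjIoo z ε) +
          spectralProjIoo z ε * NormedSpace.exp (Complex.I • z)) =
      Complex.I • (z * spectralProjIoo z ε) := by
  have hzn : IsStarNormal z := hzsa.isStarNormal
  set χ : ℂ → ℂ := fun w => if w.re ∈ Set.Ioo (-ε) ε then 1 else 0 with hχdef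
  -- basic facts about the spectrum of `z`
  have hspec : ∀ w ∈ spectrum ℂ z, w = (w.re : ℂ) ∧ w.re ∈ spectrum ℝ z ∧ |w.re| ≤ Real.pi := by
    intro w hw
    have h1 := hzsa.mem_spectrum_eq_re hw
    refine ⟨h1, ?_, ?_⟩
    · have h2 : ((w.re : ℝ) : ℂ) ∈ spectrum ℂ z := h1 ▸ hw
      exact (spectrum.algebraMap_mem_iff ℂ).mp (by simpa using h2)
    · calc |w.re| ≤ ‖w‖ := Complex.abs_re_le_norm w
        _ ≤ ‖z‖ * ‖(1 : H →L[ℂ] H)‖ := spectrum.norm_le_norm_mul_of_mem hw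
        _ ≤ ‖z‖ * 1 := by
            gcongr
            exact ContinuousLinearMap.norm_id_le
        _ = ‖z‖ := mul_one _
        _ ≤ Real.pi := hznorm
  -- continuity of the indicator on the spectrum
  have hχ : ContinuousOn χ (spectrum ℂ z) := by
    intro w hw
    obtain ⟨hw1, hw2, hw3⟩ := hspec w hw
    have hne : w.re ≠ ε := fun h => hε (h ▸ hw2)
    have hne' : w.re ≠ -ε := fun h => hε' (h ▸ hw2)
    apply ContinuousAt.continuousWithinAt
    rcases lt_trichotomy w.re ε with h | h | h
    · rcases lt_trichotomy w.re (-ε) with h' | h' | h'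
      · -- w.re < -ε : χ = 0 near w
        have hU : IsOpen {x : ℂ | x.re < -ε} := isOpen_lt Complex.continuous_re continuous_const
        refine Filter.EventuallyEq.continuousAt (y := (0 : ℂ)) ?_
        filter_upwards [hU.mem_nhds h'] with x hx
        simp only [hχdef, Set.mem_Ioo]
        rw [if_neg]
        rintro ⟨h1, h2⟩
        exact absurd hx (not_lt.mpr h1.le)
      · exact absurd h' hne'
      · -- -ε < w.re < ε : χ = 1 near w
        have hU : IsOpen {x : ℂ | -ε < x.re ∧ x.re < ε} :=
          (isOpen_lt continuous_const Complex.continuous_re).inter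
            (isOpen_lt Complex.continuous_re continuous_const)
        refine Filter.EventuallyEq.continuousAt (y := (1 : ℂ)) ?_
        filter_upwards [hU.mem_nhds ⟨h', h⟩] with x hx
        simp only [hχdef, Set.mem_Ioo]
        rw [if_pos hx]
    · exact absurd h hne
    · -- ε < w.re : χ = 0 near w
      have hU : IsOpen {x : ℂ | ε < x.re} := isOpen_lt continuous_const Complex.continuous_re
      refine Filter.EventuallyEq.continuousAt (y := (0 : ℂ)) ?_
      filter_upwards [hU.mem_nhds h] with x hx
      simp only [hχdef, Set.mem_Ioo]
      rw [if_neg]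
      rintro ⟨h1, h2⟩
      exact absurd hx (not_lt.mpr h2.le)
  -- the projection as complex functional calculus
  have hp : spectralProjIoo z ε = cfc χ z := by
    rw [spectralProjIoo, cfc_real_eq_complex _ hzsa]
    congr 1
    ext x
    simp [hχdef, apply_ite Complex.ofReal]
  -- the exponential as functional calculus
  have hIz : IsStarNormal (Complex.I • z) := ⟨by
    rw [star_smul, hzsa.star_eq]
    exact ((Commute.refl z).smul_left _).smul_right _⟩
  have hexpcont : ContinuousOn (fun w : ℂ => Complex.exp (Complex.I * w)) (spectrum ℂ z) :=
    (Complex.continuous_exp.comp (continuous_const.mul continuous_id)).continuousOn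
  have hexp : NormedSpace.exp (Complex.I • z) =
      cfc (fun w : ℂ => Complex.exp (Complex.I * w)) z := by
    rw [← CFC.complex_exp_eq_normedSpace_exp hIz, ← cfc_const_mul_id Complex.I z hzn,
      ← cfc_comp' Complex.exp (Complex.I * ·) z Complex.continuous_exp.continuousOn
        ((continuous_const.mul continuous_id).continuousOn)]
  -- the combined function
  set F : ℂ → ℂ := fun w => (1 - χ w) + χ w * Complex.exp (Complex.I * w) with hFdef
  have hFcont : ContinuousOn F (spectrum ℂ z) :=
    (continuousOn_const.sub hχ).add (hχ.mul hexpcont)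
  have key : (1 - spectralProjIoo z ε) +
      spectralProjIoo z ε * NormedSpace.exp (Complex.I • z) = cfc F z := by
    rw [hp, hexp, hFdef]
    rw [cfc_add (a := z) (f := fun w => 1 - χ w)
        (g := fun w => χ w * Complex.exp (Complex.I * w))
        (hf := continuousOn_const.sub hχ) (hg := hχ.mul hexpcont),
      cfc_mul _ _ z hχ hexpcont,
      cfc_sub (fun _ => (1 : ℂ)) χ z continuousOn_const hχ, cfc_const_one ℂ z]
  -- pointwise description of F on the spectrum
  have hFval : ∀ w ∈ spectrum ℂ z,
      (w.re ∈ Set.Ioo (-ε) ε ∧ F w = Complex.exp (Complex.I * w)) ∨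
      (w.re ∉ Set.Ioo (-ε) ε ∧ F w = 1) := by
    intro w hw
    by_cases hmem : w.re ∈ Set.Ioo (-ε) ε
    · left
      refine ⟨hmem, ?_⟩
      simp only [hFdef, hχdef]
      rw [if_pos hmem]
      ring
    · right
      refine ⟨hmem, ?_⟩
      simp only [hFdef, hχdef]
      rw [if_neg hmem]
      ring
  -- exp (I * w) for w in spectrum: re = cos, im = sin
  have hexpval : ∀ w ∈ spectrum ℂ z,
      (Complex.exp (Complex.I * w)).re = Real.cos w.re ∧
      (Complex.exp (Complex.I * w)).im = Real.sin w.re := by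
    intro w hw
    obtain ⟨hw1, -, -⟩ := hspec w hw
    have him0 : w.im = 0 := by rw [hw1]; simp
    constructor
    · simp [Complex.exp_re, Complex.mul_re, Complex.mul_im, him0]
    · simp [Complex.exp_im, Complex.mul_re, Complex.mul_im, him0]
  -- the image of F avoids the closed negative real axis (and zero)
  have hFgood : ∀ w ∈ spectrum ℂ z, F w ∈ Complex.slitPlane := by
    intro w hw
    obtain ⟨hre, him⟩ := hexpval w hw
    rcases hFval w hw with ⟨hmem, hFw⟩ | ⟨hmem, hFw⟩
    · rw [hFw, Complex.mem_slitPlane_iff]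
      by_cases hs : Real.sin w.re = 0
      · have hw0 : w.re = 0 := by
          rw [Real.sin_eq_zero_iff_of_lt_of_lt (by linarith [hmem.1]) (by linarith [hmem.2])] at hs
          exact hs
        left
        rw [hre, hw0]
        simp
      · right
        rw [him]
        exact hs
    · rw [hFw, Complex.mem_slitPlane_iff]
      left
      simp
  -- continuity of log on the image
  have hlogcont : ContinuousOn Complex.log (F '' spectrum ℂ z) := by
    rintro y ⟨x, hx, rfl⟩
    exact (continuousAt_clog (hFgood x hx)).continuousWithinAt
  constructor
  · -- spectrum statement
    rw [key, cfc_map_spectrum F z hzn hFcont]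
    ext y
    simp only [Set.mem_inter_iff, Set.mem_image, Set.mem_setOf_eq, Set.mem_empty_iff_false,
      iff_false, not_and]
    rintro ⟨x, hx, rfl⟩
    intro him0 hre0
    have := hFgood x hx
    rw [Complex.mem_slitPlane_iff] at this
    rcases this with h | h
    · exact absurd hre0 (not_le.mpr h)
    · exact h him0
  · -- the log computation
    rw [key, ← cfc_comp' Complex.log F z hlogcont hFcont]
    have heq : (spectrum ℂ z).EqOn (fun w => Complex.log (F w))
        (fun w => Complex.I * (w * χ w)) := by
      intro w hw
      obtain ⟨hw1, hw2, hw3⟩ := hspec w hw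
      rcases hFval w hw with ⟨hmem, hFw⟩ | ⟨hmem, hFw⟩
      · have himIw : (Complex.I * w).im = w.re := by
          rw [hw1]
          simp
        have : Complex.log (F w) = Complex.I * w := by
          rw [hFw, Complex.log_exp (by rw [himIw]; linarith [hmem.1, hεπ])
            (by rw [himIw]; linarith [hmem.2, hεπ])]
        simp only [this, hχdef]
        rw [if_pos hmem, mul_one]
      · simp only [hFw, Complex.log_one, hχdef]
        rw [if_neg hmem, mul_zero, mul_zero]
    rw [cfc_congr heq, cfc_const_mul Complex.I (fun w => w * χ w) z
        (continuousOn_id.mul hχ),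
      cfc_mul (fun w : ℂ => w) χ z continuousOn_id hχ, cfc_id' ℂ z hzn, ← hp]

end
end
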